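/- Let T ⊂ ℝ² be the triangle given by the convex hull of three affinely independent points v₁, v₂, v₃ (so T does not degenerate to a line), with area A = μ(T) and centroid c = (c₁, c₂), and second-order central moments I^xx, I^xy, I^yy of T about c. Then the 3×3 matrix W = [[A, 0, 0], [A·c₁, I^xx, I^xy], [A·c₂, I^xy, I^yy]] satisfies det W = A·(I^xx·I^yy − (I^xy)²) > 0; in particular W is invertible and for every f ∈ ℝ³ the linear system W·d = f has a unique solution d ∈ ℝ³. -/

import Mathlib

open MeasureTheory

lemma line_volume_zero (c : Fin 2 → ℝ) (a b : ℝ) (hab : ¬(a = 0 ∧ b = 0)) :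
    volume {x : Fin 2 → ℝ | a * (x 0 - c 0) + b * (x 1 - c 1) = 0} = 0 := by
  set L : (Fin 2 → ℝ) →ₗ[ℝ] ℝ :=
    a • (LinearMap.proj 0 : (Fin 2 → ℝ) →ₗ[ℝ] ℝ) + b • (LinearMap.proj 1) with hLdef
  have hL : ∀ x : Fin 2 → ℝ, L x = a * x 0 + b * x 1 := fun x => by
    simp [hLdef]
  have hker : LinearMap.ker L ≠ ⊤ := by
    intro h
    rw [LinearMap.ker_eq_top] at h
    have h1 : L ![(1:ℝ), 0] = 0 := by rw [h]; rfl
    have h2 : L ![(0:ℝ), 1] = 0 := by rw [h]; rfl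
    rw [hL] at h1 h2
    simp at h1 h2
    exact hab ⟨h1, h2⟩
  have hset : {x : Fin 2 → ℝ | a * (x 0 - c 0) + b * (x 1 - c 1) = 0}
      = (fun x => x + (-c)) ⁻¹' (LinearMap.ker L : Set (Fin 2 → ℝ)) := by
    ext x
    simp only [Set.mem_setOf_eq, Set.mem_preimage, SetLike.mem_coe, LinearMap.mem_ker, hL,
      Pi.add_apply, Pi.neg_apply]
    constructor <;> intro hx <;> linarith
  rw [hset, measure_preimage_add_right]
  exact Measure.addHaar_submodule (volume : Measure (Fin 2 → ℝ)) (LinearMap.ker L) hker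

lemma sq_integral_pos (T : Set (Fin 2 → ℝ)) (hm : MeasurableSet T) (hcpt : IsCompact T)
    (hpos : 0 < volume T) (c : Fin 2 → ℝ) (a b : ℝ) (hab : ¬(a = 0 ∧ b = 0)) :
    0 < ∫ x in T, (a * (x 0 - c 0) + b * (x 1 - c 1)) ^ 2 := by
  set h : (Fin 2 → ℝ) → ℝ := fun x => a * (x 0 - c 0) + b * (x 1 - c 1) with hh
  have hcont : Continuous h := by
    apply Continuous.add <;> apply Continuous.mul
    · exact continuous_const
    · exact (continuous_apply 0).sub continuous_const
    · exact continuous_const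
    · exact (continuous_apply 1).sub continuous_const
  have hint : IntegrableOn (fun x => h x ^ 2) T volume :=
    (hcont.pow 2).continuousOn.integrableOn_compact hcpt
  have hnn : 0 ≤ ∫ x in T, h x ^ 2 := integral_nonneg fun x => sq_nonneg _
  rcases hnn.lt_or_eq with h' | h'
  · exact h'
  exfalso
  have hze : (fun x => h x ^ 2) =ᵐ[volume.restrict T] 0 :=
    (integral_eq_zero_iff_of_nonneg_ae (Filter.Eventually.of_forall fun x => sq_nonneg _)
      hint).mp h'.symm
  have hnz : volume ({x | ¬ h x ^ 2 = 0} ∩ T) = 0 := by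
    have := ae_iff.mp hze
    rwa [Measure.restrict_apply' hm] at this
  have hTzero : volume T = 0 := by
    refine le_antisymm ?_ zero_le
    have hsub : T ⊆ {x | h x = 0} ∪ ({x | ¬ h x ^ 2 = 0} ∩ T) := by
      intro x hx
      by_cases hx0 : h x = 0
      · exact Or.inl hx0
      · exact Or.inr ⟨by simpa [pow_eq_zero_iff] using hx0, hx⟩
    calc volume T ≤ volume ({x | h x = 0} ∪ ({x | ¬ h x ^ 2 = 0} ∩ T)) := measure_mono hsub
      _ ≤ volume {x | h x = 0} + volume ({x | ¬ h x ^ 2 = 0} ∩ T) := measure_union_le _ _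
      _ ≤ 0 := by rw [hnz, line_volume_zero c a b hab]; simp
  exact hpos.ne' hTzero

/-- For a nondegenerate triangle `T = conv{v₁,v₂,v₃} ⊂ ℝ²` with area `A`, centroid `c` and
second-order central moments `Ixx, Ixy, Iyy`, the matrix
`W = [[A,0,0],[A·c₁,Ixx,Ixy],[A·c₂,Ixy,Iyy]]` has `det W = A·(Ixx·Iyy − Ixy²) > 0`; in
particular `W` is invertible and `W·d = f` has a unique solution for every `f`. -/
theorem smoothing_system_matrix_nonsingular_triangle
    (v₁ v₂ v₃ : Fin 2 → ℝ) (hindep : AffineIndependent ℝ ![v₁, v₂, v₃])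
    (T : Set (Fin 2 → ℝ)) (hT : T = convexHull ℝ {v₁, v₂, v₃})
    (A : ℝ) (hA : A = (volume T).toReal)
    (c : Fin 2 → ℝ) (hc : c = A⁻¹ • ∫ x in T, x)
    (Ixx Ixy Iyy : ℝ)
    (hIxx : Ixx = ∫ x in T, (x 0 - c 0) ^ 2)
    (hIxy : Ixy = ∫ x in T, (x 0 - c 0) * (x 1 - c 1))
    (hIyy : Iyy = ∫ x in T, (x 1 - c 1) ^ 2)
    (W : Matrix (Fin 3) (Fin 3) ℝ)
    (hW : W = Matrix.of ![![A, 0, 0], ![A * c 0, Ixx, Ixy], ![A * c 1, Ixy, Iyy]]) :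
    W.det = A * (Ixx * Iyy - Ixy ^ 2) ∧ 0 < W.det ∧ IsUnit W ∧
      ∀ f : Fin 3 → ℝ, ∃! d : Fin 3 → ℝ, W.mulVec d = f := by
  -- Basic geometry of T
  have hrange : Set.range ![v₁, v₂, v₃] = {v₁, v₂, v₃} := by
    ext x
    constructor
    · rintro ⟨i, rfl⟩; fin_cases i <;> simp
    · rintro (rfl | rfl | rfl)
      exacts [⟨0, rfl⟩, ⟨1, rfl⟩, ⟨2, rfl⟩]
  have hspan : affineSpan ℝ ({v₁, v₂, v₃} : Set (Fin 2 → ℝ)) = ⊤ := by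
    rw [← hrange, hindep.affineSpan_eq_top_iff_card_eq_finrank_add_one]
    simp [Module.finrank_fin_fun]
  have hint_ne : (interior T).Nonempty := by
    rw [hT]
    exact interior_convexHull_nonempty_iff_affineSpan_eq_top.mpr hspan
  have hTpos : 0 < volume T := MeasureTheory.Measure.measure_pos_of_nonempty_interior _ hint_ne
  have hcpt : IsCompact T := hT ▸ (Set.toFinite _).isCompact_convexHull ℝ
  have hm : MeasurableSet T := hcpt.isClosed.measurableSet
  have hApos : 0 < A := by
    rw [hA]; exact ENNReal.toReal_pos hTpos.ne' hcpt.measure_lt_top.ne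
  -- integrability of the moment integrands
  have hf2 : IntegrableOn (fun x : Fin 2 → ℝ => (x 0 - c 0) ^ 2) T volume :=
    ((((continuous_apply 0).sub continuous_const).pow 2)).continuousOn.integrableOn_compact hcpt
  have hfg : IntegrableOn (fun x : Fin 2 → ℝ => (x 0 - c 0) * (x 1 - c 1)) T volume :=
    ((((continuous_apply 0).sub continuous_const).mul
      ((continuous_apply 1).sub continuous_const))).continuousOn.integrableOn_compact hcpt
  have hg2 : IntegrableOn (fun x : Fin 2 → ℝ => (x 1 - c 1) ^ 2) T volume :=
    ((((continuous_apply 1).sub continuous_const).pow 2)).continuousOn.integrableOn_compact hcpt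
  have hexp : ∀ a b : ℝ, (∫ x in T, (a * (x 0 - c 0) + b * (x 1 - c 1)) ^ 2)
      = a ^ 2 * Ixx + 2 * a * b * Ixy + b ^ 2 * Iyy := by
    intro a b
    have hpt : ∀ x : Fin 2 → ℝ, (a * (x 0 - c 0) + b * (x 1 - c 1)) ^ 2
        = a ^ 2 * (x 0 - c 0) ^ 2 + (2 * a * b) * ((x 0 - c 0) * (x 1 - c 1))
          + b ^ 2 * (x 1 - c 1) ^ 2 := fun x => by ring
    have h1 : IntegrableOn (fun x : Fin 2 → ℝ => a ^ 2 * (x 0 - c 0) ^ 2) T volume :=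
      hf2.const_mul _
    have h2 : IntegrableOn
        (fun x : Fin 2 → ℝ => (2 * a * b) * ((x 0 - c 0) * (x 1 - c 1))) T volume :=
      hfg.const_mul _
    have h3 : IntegrableOn (fun x : Fin 2 → ℝ => b ^ 2 * (x 1 - c 1) ^ 2) T volume :=
      hg2.const_mul _
    have h12 : IntegrableOn (fun x : Fin 2 → ℝ => a ^ 2 * (x 0 - c 0) ^ 2
        + (2 * a * b) * ((x 0 - c 0) * (x 1 - c 1))) T volume := h1.add h2
    simp_rw [hpt]
    rw [integral_add h12 h3, integral_add h1 h2,
      integral_const_mul, integral_const_mul, integral_const_mul, hIxx, hIxy, hIyy]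
  have hIxxpos : 0 < Ixx := by
    have := sq_integral_pos T hm hcpt hTpos c 1 0 (by simp)
    rw [hexp 1 0] at this; linarith
  have hMpos : 0 < Ixx * Iyy - Ixy ^ 2 := by
    have := sq_integral_pos T hm hcpt hTpos c (-Ixy) Ixx (fun h => hIxxpos.ne' h.2)
    rw [hexp] at this
    nlinarith [this, hIxxpos, sq_nonneg Ixy]
  have hdetW : W.det = A * (Ixx * Iyy - Ixy ^ 2) := by
    subst hW
    simp [Matrix.det_fin_three]
    ring
  have hdetpos : 0 < W.det := by rw [hdetW]; exact mul_pos hApos hMpos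
  have hU : IsUnit W := (Matrix.isUnit_iff_isUnit_det W).mpr
    (isUnit_iff_ne_zero.mpr hdetpos.ne')
  refine ⟨hdetW, hdetpos, hU, fun f => ?_⟩
  obtain ⟨d, hd⟩ := (Matrix.mulVec_surjective_iff_isUnit.mpr hU) f
  exact ⟨d, hd, fun y hy => (Matrix.mulVec_injective_iff_isUnit.mpr hU) (hy.trans hd.symm)⟩
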